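/- Let a, b be C^1 functions on an interval, z > 0 with a(z) = z·b(z), and suppose there exists a nonnegative continuous function r such that z·b(x) − a(x) = −r(x)·(z − x). Let A, B be primitives of a, b with A(z) = 0 = B(z). Then along solutions of the system x' = y − x, y' = a(x)y − b(x)y², with b ≥ 0 and y > 0, the function V(x,y) = z·B(x) − A(x) + y − z − z·log(y/z) satisfies dV/dt = −b(x)(y − z)² − r(x)(z − x)² ≤ 0. -/

import Mathlib

/-- The general Lyapunov function theorem: along solutions of
`x' = y - x`, `y' = a(x) y - b(x) y²`, with `z·b(x) - a(x) = -r(x)(z-x)`,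
the function `V = z B(x) - A(x) + y - z - z log(y/z)` satisfies
`dV/dt = -b(x)(y-z)² - r(x)(z-x)² ≤ 0`. -/
theorem lyapunov_general
    (a b A B r : ℝ → ℝ) (z : ℝ) (hz : 0 < z)
    (ha : ContDiff ℝ 1 a) (hb : ContDiff ℝ 1 b)
    (hr : Continuous r) (hr0 : ∀ u, 0 ≤ r u) (hb0 : ∀ u, 0 ≤ b u)
    (hzab : a z = z * b z)
    (hA : ∀ u, HasDerivAt A (a u) u) (hB : ∀ u, HasDerivAt B (b u) u)
    (hAz : A z = 0) (hBz : B z = 0)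
    (hid : ∀ u, z * b u - a u = -(r u) * (z - u))
    (x y : ℝ → ℝ)
    (hx : ∀ t, HasDerivAt x (y t - x t) t)
    (hy : ∀ t, HasDerivAt y (a (x t) * y t - b (x t) * (y t) ^ 2) t)
    (hypos : ∀ t, 0 < y t) :
    ∀ t, HasDerivAt (fun s => z * B (x s) - A (x s) + y s - z - z * Real.log (y s / z))
        (-(b (x t)) * (y t - z) ^ 2 - r (x t) * (z - x t) ^ 2) t ∧
      -(b (x t)) * (y t - z) ^ 2 - r (x t) * (z - x t) ^ 2 ≤ 0 := by
  intro t
  have hyt := hypos t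
  have hBx : HasDerivAt (fun s => B (x s)) (b (x t) * (y t - x t)) t :=
    (hB (x t)).comp t (hx t)
  have hAx : HasDerivAt (fun s => A (x s)) (a (x t) * (y t - x t)) t :=
    (hA (x t)).comp t (hx t)
  have hdiv : HasDerivAt (fun s => y s / z) ((a (x t) * y t - b (x t) * (y t) ^ 2) / z) t :=
    (hy t).div_const z
  have hne : y t / z ≠ 0 := div_ne_zero hyt.ne' hz.ne'
  have hlog : HasDerivAt (fun s => Real.log (y s / z))
      ((y t / z)⁻¹ * ((a (x t) * y t - b (x t) * (y t) ^ 2) / z)) t :=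
    by have h := Real.hasDerivAt_log hne; exact h.comp t hdiv
  constructor
  · have hV : HasDerivAt (fun s => z * B (x s) - A (x s) + y s - z - z * Real.log (y s / z))
        (z * (b (x t) * (y t - x t)) - a (x t) * (y t - x t)
          + (a (x t) * y t - b (x t) * (y t) ^ 2) - 0
          - z * ((y t / z)⁻¹ * ((a (x t) * y t - b (x t) * (y t) ^ 2) / z))) t :=
      ((((hBx.const_mul z).sub hAx).add (hy t)).sub (hasDerivAt_const t z)).sub
        (hlog.const_mul z)
    have key : (y t / z)⁻¹ * ((a (x t) * y t - b (x t) * (y t) ^ 2) / z)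
        = a (x t) - b (x t) * y t := by
      field_simp
    rw [key] at hV
    convert hV using 1
    have h1 : z * b (x t) - a (x t) = -(r (x t)) * (z - x t) := hid (x t)
    linear_combination (x t - z) * h1
  · have h1 : 0 ≤ b (x t) * (y t - z) ^ 2 := mul_nonneg (hb0 _) (sq_nonneg _)
    have h2 : 0 ≤ r (x t) * (z - x t) ^ 2 := mul_nonneg (hr0 _) (sq_nonneg _)
    linarith
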